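/- For all x_1, x_2, y ∈ EuclideanSpace ℝ (Fin d), the function x_1 ↦ L(x_1, x_2, y) (with x_2, y fixed) is differentiable, and its gradient equals ∇_{x_1}L = 2·(1 − Q_1)·(x_1 − y), where Q_1 = exp(−D(x_1,y)) / (exp(−D(x_1,y)) + exp(−D(x_2,y))). Moreover the scalar coefficient satisfies 0 < 2·(1 − Q_1) < 2, so the gradient with respect to each image embedding is a positive multiple of (x_1 − y), pointing away from alignment with y. -/

import Mathlib

/-!
STATEMENT 13: The map `x₁ ↦ L(x₁, x₂, y)` is differentiable with gradient
`2 (1 − Q₁) • (x₁ − y)` where `Q₁ = exp (−D(x₁,y)) / (exp (−D(x₁,y)) + exp (−D(x₂,y)))`,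
and `0 < 2 (1 − Q₁) < 2`. (`HasGradientAt` expresses both differentiability and the
gradient value.)
-/

open RealInnerProductSpace

/-- Squared Euclidean distance `D(u,v) = ‖u − v‖²`. -/
noncomputable def sqDist {d : ℕ} (u v : EuclideanSpace ℝ (Fin d)) : ℝ := ‖u - v‖ ^ 2

/-- Two-image one-caption contrastive loss
`L(x₁, x₂, y) = log 2 + D(x₁,y) + D(x₂,y) + log (exp (−D(x₁,y)) + exp (−D(x₂,y)))`. -/
noncomputable def twoImageLoss {d : ℕ} (x₁ x₂ y : EuclideanSpace ℝ (Fin d)) : ℝ :=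
  Real.log 2 + sqDist x₁ y + sqDist x₂ y +
    Real.log (Real.exp (-sqDist x₁ y) + Real.exp (-sqDist x₂ y))

theorem twoImageLoss_gradient_x₁
    (d : ℕ) (x₁ x₂ y : EuclideanSpace ℝ (Fin d)) (Q₁ : ℝ)
    (hQ₁ : Q₁ = Real.exp (-sqDist x₁ y) /
      (Real.exp (-sqDist x₁ y) + Real.exp (-sqDist x₂ y))) :
    HasGradientAt (fun z => twoImageLoss z x₂ y) ((2 * (1 - Q₁)) • (x₁ - y)) x₁ ∧
    0 < 2 * (1 - Q₁) ∧ 2 * (1 - Q₁) < 2 := by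
  set a : ℝ := sqDist x₁ y with ha
  set b : ℝ := Real.exp (-sqDist x₂ y) with hb
  have hden : (0:ℝ) < Real.exp (-a) + b := by positivity
  have hQlt : Q₁ < 1 := by
    rw [hQ₁]
    rw [div_lt_one hden]
    have : (0:ℝ) < b := Real.exp_pos _
    linarith
  have hQpos : 0 < Q₁ := by
    rw [hQ₁]
    positivity
  refine ⟨?_, by linarith, by linarith⟩
  -- derivative of the scalar part
  have hφ : HasDerivAt (fun t : ℝ => Real.log 2 + t + sqDist x₂ y +
      Real.log (Real.exp (-t) + b)) (1 - Q₁) a := by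
    have h1 : HasDerivAt (fun t : ℝ => Real.log 2 + t + sqDist x₂ y) 1 a := by
      simpa using ((hasDerivAt_id a).const_add (Real.log 2)).add_const (sqDist x₂ y)
    have h2 : HasDerivAt (fun t : ℝ => Real.exp (-t) + b)
        (-Real.exp (-a)) a := by
      have := (hasDerivAt_id a).neg.exp
      simpa using this.add_const b
    have h3 : HasDerivAt (fun t : ℝ => Real.log (Real.exp (-t) + b))
        (-Real.exp (-a) / (Real.exp (-a) + b)) a := h2.log (ne_of_gt hden)
    have := h1.add h3
    have heq : 1 + -Real.exp (-a) / (Real.exp (-a) + b) = 1 - Q₁ := by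
      rw [hQ₁]; ring
    rw [heq] at this
    exact this
  -- derivative of z ↦ sqDist z y
  have hg : HasFDerivAt (fun z : EuclideanSpace ℝ (Fin d) => sqDist z y)
      ((fderivInnerCLM ℝ (x₁ - y, x₁ - y)).comp
        (((ContinuousLinearMap.id ℝ _).prod (ContinuousLinearMap.id ℝ _)))) x₁ := by
    have hid : HasFDerivAt (fun z : EuclideanSpace ℝ (Fin d) => z - y)
        (ContinuousLinearMap.id ℝ _) x₁ := (hasFDerivAt_id x₁).sub_const y
    have := hid.inner ℝ hid
    have hfun : (fun z : EuclideanSpace ℝ (Fin d) => ⟪z - y, z - y⟫) =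
        fun z => sqDist z y := by
      funext z
      rw [real_inner_self_eq_norm_sq, sqDist]
    rw [hfun] at this
    exact this
  have hcomp := hφ.comp_hasFDerivAt x₁ hg
  rw [hasGradientAt_iff_hasFDerivAt]
  have hcomp' : HasFDerivAt (fun z => twoImageLoss z x₂ y)
      ((1 - Q₁) • (fderivInnerCLM ℝ (x₁ - y, x₁ - y)).comp
        (((ContinuousLinearMap.id ℝ _).prod (ContinuousLinearMap.id ℝ _)))) x₁ := hcomp
  refine hcomp'.congr_fderiv ?_
  symm
  apply ContinuousLinearMap.ext
  intro h
  simp only [InnerProductSpace.toDual_apply_apply, ContinuousLinearMap.smul_apply,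
    ContinuousLinearMap.coe_comp', Function.comp_apply, ContinuousLinearMap.prod_apply,
    ContinuousLinearMap.coe_id', id_eq, fderivInnerCLM_apply]
  rw [real_inner_smul_left]
  rw [real_inner_comm (x₁ - y) h]
  rw [smul_eq_mul]; ring
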